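/- Fix n ≥ 2, constants k_1, …, k_n > 0, η > 0, and N_ζ ∈ ℕ. Let g : [0,∞) → ℝ be continuously differentiable with g(t) ≥ g_{0l} > 0 for all t, let Φ : [0,∞) → ℝ^{N_ζ} be continuous, and let P : [0,∞) → ℝ^{N_ζ×N_ζ} be differentiable with P(t) symmetric invertible for all t. Define B(t) ∈ ℝ^{n×n} by B_{ii} = −k_i for 1 ≤ i ≤ n−1, B_{i,i+1} = 1 for 1 ≤ i ≤ n−2, B_{n−1,n} = g(t), B_{i+1,i} = −1 for 1 ≤ i ≤ n−1, B_{nn} = −k_n g(t) − g'(t)/g(t), other entries zero; let b = (0,…,0,1)ᵀ ∈ ℝⁿ, H(t) = diag(1,…,1,g(t)), and Q(t) = diag(2k_1,…,2k_{n−1}, 2k_n g(t)² + g'(t)). Suppose z : [0,∞) → ℝⁿ and W̃ : [0,∞) → ℝ^{N_ζ} are differentiable and satisfy ż(t) = B(t)z(t) + bΦ(t)ᵀW̃(t) and Ẇ̃(t) = −η g(t) P(t)Φ(t)(bᵀz(t)). Then the function V₁(t) := (1/2)z(t)ᵀH(t)z(t) + (1/(2η))W̃(t)ᵀP(t)^{-1}W̃(t)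 is differentiable with V̇₁(t) = −(1/2)z(t)ᵀQ(t)z(t) + (1/(2η))W̃(t)ᵀ(d/dt)(P(t)^{-1})W̃(t) for all t. -/

import Mathlib

open Matrix

private theorem aux_det_diff {m : ℕ} (A : ℝ → Matrix (Fin m) (Fin m) ℝ) (t : ℝ)
    (hA : ∀ i j, DifferentiableAt ℝ (fun s => A s i j) t) :
    DifferentiableAt ℝ (fun s => (A s).det) t := by
  simp only [Matrix.det_apply, Units.smul_def, zsmul_eq_mul]
  exact DifferentiableAt.fun_sum fun σ _ => (differentiableAt_const _).mul
    (DifferentiableAt.fun_finsetProd (fun i _ => hA (σ i) i))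

private theorem aux_inv_diff {m : ℕ} (A : ℝ → Matrix (Fin m) (Fin m) ℝ) (t : ℝ)
    (hA : ∀ i j, DifferentiableAt ℝ (fun s => A s i j) t)
    (hdet : IsUnit (A t).det) (i j : Fin m) :
    DifferentiableAt ℝ (fun s => (A s)⁻¹ i j) t := by
  have heq : (fun s => (A s)⁻¹ i j)
      = fun s => ((A s).det)⁻¹ * ((A s).updateRow j (Pi.single i 1)).det := by
    funext s
    rw [Matrix.inv_def, Matrix.smul_apply, Ring.inverse_eq_inv', Matrix.adjugate_apply]
    exact smul_eq_mul ..
  rw [heq]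
  refine DifferentiableAt.mul ((aux_det_diff A t hA).inv (IsUnit.ne_zero (by simpa using hdet))) ?_
  refine aux_det_diff _ t fun a b => ?_
  by_cases h : a = j
  · simp only [h, Matrix.updateRow_self]
    exact differentiableAt_const _
  · simp only [Matrix.updateRow_ne h]
    exact hA _ _

private theorem aux_hasDerivAt_dot_mulVec {m p : ℕ} {u : ℝ → Fin m → ℝ}
    {M : ℝ → Matrix (Fin m) (Fin p) ℝ} {v : ℝ → Fin p → ℝ}
    {u' : Fin m → ℝ} {M' : Matrix (Fin m) (Fin p) ℝ} {v' : Fin p → ℝ} {t : ℝ}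
    (hu : HasDerivAt u u' t) (hM : ∀ i j, HasDerivAt (fun s => M s i j) (M' i j) t)
    (hv : HasDerivAt v v' t) :
    HasDerivAt (fun s => u s ⬝ᵥ (M s) *ᵥ (v s))
      (u' ⬝ᵥ (M t) *ᵥ (v t) + u t ⬝ᵥ M' *ᵥ v t + u t ⬝ᵥ (M t) *ᵥ v') t := by
  have hu' : ∀ i, HasDerivAt (fun s => u s i) (u' i) t := fun i => hasDerivAt_pi.mp hu i
  have hv' : ∀ j, HasDerivAt (fun s => v s j) (v' j) t := fun j => hasDerivAt_pi.mp hv j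
  have key : HasDerivAt (fun s => ∑ i, ∑ j, u s i * (M s i j * v s j))
      (∑ i, ∑ j, (u' i * (M t i j * v t j) +
        u t i * (M' i j * v t j + M t i j * v' j))) t := by
    apply HasDerivAt.fun_sum; intro i _
    apply HasDerivAt.fun_sum; intro j _
    exact (hu' i).mul ((hM i j).mul (hv' j))
  have hfun : (fun s => u s ⬝ᵥ (M s) *ᵥ (v s))
      = fun s => ∑ i, ∑ j, u s i * (M s i j * v s j) := by
    funext s
    simp [dotProduct, mulVec, Finset.mul_sum]
  rw [hfun]
  convert key using 1
  simp only [dotProduct, mulVec, Finset.mul_sum, ← Finset.sum_add_distrib]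
  apply Finset.sum_congr rfl; intro i _
  apply Finset.sum_congr rfl; intro j _
  ring

private theorem aux_entry_identity (n : ℕ) (hn : 2 ≤ n) (k : Fin n → ℝ) (gt g't : ℝ)
    (hg : gt ≠ 0) (i j : Fin n) :
    (if (i:ℕ) = n-1 then gt else 1) *
      (if i = j then (if (i:ℕ) = n-1 then -k i * gt - g't / gt else -k i)
       else if (j:ℕ) = (i:ℕ)+1 then (if (i:ℕ) = n-2 then gt else 1)
       else if (i:ℕ) = (j:ℕ)+1 then -1 else 0)
    + (if (j:ℕ) = n-1 then gt else 1) *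
      (if j = i then (if (j:ℕ) = n-1 then -k j * gt - g't / gt else -k j)
       else if (i:ℕ) = (j:ℕ)+1 then (if (j:ℕ) = n-2 then gt else 1)
       else if (j:ℕ) = (i:ℕ)+1 then -1 else 0)
    + (if i = j then (if (i:ℕ) = n-1 then g't else 0) else 0)
    = -(if i = j then (if (i:ℕ) = n-1 then 2 * k i * gt^2 + g't else 2 * k i) else 0) := by
  have hi := i.isLt
  have hj := j.isLt
  by_cases hij : i = j
  · subst hij
    simp only [if_pos rfl]
    by_cases h1 : (i:ℕ) = n-1
    · simp only [if_pos h1, if_true]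
      field_simp
      ring
    · simp only [if_neg h1, if_true]
      ring
  · have hne : (i:ℕ) ≠ (j:ℕ) := fun h => hij (Fin.ext h)
    simp only [if_neg hij, if_neg (Ne.symm hij)]
    split_ifs <;> first | (exfalso; omega) | ring


/-- **Lyapunov derivative computation (equations (64)–(65)) in the proof of Lemma 4.**
Along the transformed nominal RTPL closed-loop dynamics
`ż = B(t)z + b Φ(t)ᵀ W̃`, `Ẇ̃ = -η g(t) P(t) Φ(t) (bᵀz)`, the function
`V₁ = (1/2) zᵀ H z + (1/(2η)) W̃ᵀ P⁻¹ W̃` satisfies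
`V̇₁ = -(1/2) zᵀ Q z + (1/(2η)) W̃ᵀ (d/dt)(P⁻¹) W̃`.

Indices are 0-based: row/column `n-1` corresponds to the paper's index `n`. -/
theorem stmt9 (n Nζ : ℕ) (hn : 2 ≤ n) (k : Fin n → ℝ) (η : ℝ) (hη : 0 < η)
    (g g' : ℝ → ℝ) (g0l : ℝ) (hg0l : 0 < g0l) (hgl : ∀ t, g0l ≤ g t)
    (hg : ∀ t, HasDerivAt g (g' t) t) (hg'cont : Continuous g')
    (Φ : ℝ → (Fin Nζ → ℝ)) (hΦ : Continuous Φ)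
    (P : ℝ → Matrix (Fin Nζ) (Fin Nζ) ℝ)
    (hPsym : ∀ t, (P t).IsHermitian) (hPinv : ∀ t, IsUnit (P t).det)
    (hPdiff : ∀ t i j, DifferentiableAt ℝ (fun s => P s i j) t)
    (b : Fin n → ℝ) (hb : b = fun (i : Fin n) => if (i : ℕ) = n - 1 then 1 else 0)
    (B : ℝ → Matrix (Fin n) (Fin n) ℝ)
    (hB : ∀ t, B t = Matrix.of fun (i j : Fin n) =>
      if i = j then (if (i : ℕ) = n - 1 then -k i * g t - g' t / g t else -k i)
      else if (j : ℕ) = (i : ℕ) + 1 then (if (i : ℕ) = n - 2 then g t else 1)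
      else if (i : ℕ) = (j : ℕ) + 1 then -1
      else 0)
    (H : ℝ → Matrix (Fin n) (Fin n) ℝ)
    (hH : ∀ t, H t = Matrix.diagonal fun (i : Fin n) =>
      if (i : ℕ) = n - 1 then g t else 1)
    (Q : ℝ → Matrix (Fin n) (Fin n) ℝ)
    (hQ : ∀ t, Q t = Matrix.diagonal fun (i : Fin n) =>
      if (i : ℕ) = n - 1 then 2 * k i * (g t) ^ 2 + g' t else 2 * k i)
    (z : ℝ → (Fin n → ℝ)) (W : ℝ → (Fin Nζ → ℝ))
    (hz : ∀ t, HasDerivAt z ((B t).mulVec (z t) + (Φ t ⬝ᵥ W t) • b) t)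
    (hW : ∀ t, HasDerivAt W ((-(η * g t * (b ⬝ᵥ z t))) • ((P t).mulVec (Φ t))) t)
    (V₁ : ℝ → ℝ)
    (hV₁ : V₁ = fun t => (1 / 2) * (z t ⬝ᵥ (H t).mulVec (z t)) +
      (1 / (2 * η)) * (W t ⬝ᵥ ((P t)⁻¹).mulVec (W t))) :
    ∀ t, HasDerivAt V₁
      (-(1 / 2) * (z t ⬝ᵥ (Q t).mulVec (z t)) +
        (1 / (2 * η)) *
          (W t ⬝ᵥ (Matrix.of fun (i j : Fin Nζ) =>
            deriv (fun s => (P s)⁻¹ i j) t).mulVec (W t))) t := by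
  intro t
  have hgpos : ∀ s, (0:ℝ) < g s := fun s => lt_of_lt_of_le hg0l (hgl s)
  have hgne : g t ≠ 0 := ne_of_gt (hgpos t)
  have hηne : η ≠ 0 := ne_of_gt hη
  -- abbreviations
  set c : ℝ := Φ t ⬝ᵥ W t with hc
  set d : ℝ := -(η * g t * (b ⬝ᵥ z t)) with hd
  set H' : Matrix (Fin n) (Fin n) ℝ :=
    Matrix.diagonal (fun i => if (i:ℕ) = n-1 then g' t else 0) with hH'
  set Pi' : Matrix (Fin Nζ) (Fin Nζ) ℝ :=
    Matrix.of (fun i j => deriv (fun s => (P s)⁻¹ i j) t) with hPi'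
  -- derivative of H entries
  have hHder : ∀ i j, HasDerivAt (fun s => H s i j) (H' i j) t := by
    intro i j
    have hfe : (fun s => H s i j)
        = fun s => if i = j then (if (i:ℕ) = n-1 then g s else 1) else 0 := by
      funext s
      rw [hH s]
      by_cases h : i = j
      · subst h; simp [Matrix.diagonal_apply_eq]
      · simp [Matrix.diagonal_apply_ne _ h, if_neg h]
    rw [hfe]
    rcases eq_or_ne i j with rfl | h
    · rcases eq_or_ne ((i:ℕ)) (n-1) with h2 | h2
      · simpa [hH', Matrix.diagonal_apply_eq, h2] using hg t
      · simpa [hH', Matrix.diagonal_apply_eq, h2] using hasDerivAt_const t (1:ℝ)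
    · simpa [hH', Matrix.diagonal_apply_ne _ h, if_neg h] using hasDerivAt_const t (0:ℝ)
  -- derivative of P⁻¹ entries
  have hPider : ∀ i j, HasDerivAt (fun s => (P s)⁻¹ i j) (Pi' i j) t := by
    intro i j
    simpa [hPi'] using
      (aux_inv_diff P t (fun a b => hPdiff t a b) (hPinv t) i j).hasDerivAt
  -- the two quadratic forms
  have hS1 := aux_hasDerivAt_dot_mulVec (hz t) hHder (hz t)
  have hS2 := aux_hasDerivAt_dot_mulVec (hW t) hPider (hW t)
  have hV : HasDerivAt V₁
      ((1/2) * ((B t *ᵥ z t + c • b) ⬝ᵥ H t *ᵥ z t + z t ⬝ᵥ H' *ᵥ z t +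
          z t ⬝ᵥ H t *ᵥ (B t *ᵥ z t + c • b)) +
        (1/(2*η)) * ((d • (P t *ᵥ Φ t)) ⬝ᵥ (P t)⁻¹ *ᵥ W t + W t ⬝ᵥ Pi' *ᵥ W t +
          W t ⬝ᵥ (P t)⁻¹ *ᵥ (d • (P t *ᵥ Φ t)))) t := by
    rw [hV₁]
    exact (hS1.const_mul _).add (hS2.const_mul _)
  -- basic dot-product identities
  have swapn : ∀ (M : Matrix (Fin n) (Fin n) ℝ) (x y : Fin n → ℝ),
      (M *ᵥ x) ⬝ᵥ y = x ⬝ᵥ (Mᵀ *ᵥ y) := by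
    intro M x y
    rw [dotProduct_comm, dotProduct_mulVec, dotProduct_comm, Matrix.mulVec_transpose]
  have swapN : ∀ (M : Matrix (Fin Nζ) (Fin Nζ) ℝ) (x y : Fin Nζ → ℝ),
      (M *ᵥ x) ⬝ᵥ y = x ⬝ᵥ (Mᵀ *ᵥ y) := by
    intro M x y
    rw [dotProduct_comm, dotProduct_mulVec, dotProduct_comm, Matrix.mulVec_transpose]
  have hHsym : (H t)ᵀ = H t := by rw [hH]; exact Matrix.diagonal_transpose _
  have hPsymt : (P t)ᵀ = P t := by
    have := (hPsym t).eq
    rwa [Matrix.conjTranspose_eq_transpose_of_trivial] at this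
  have hHb : H t *ᵥ b = g t • b := by
    funext i
    rw [hH, hb]
    simp only [Matrix.mulVec_diagonal, Pi.smul_apply, smul_eq_mul]
    split_ifs <;> ring
  -- cross terms
  have e1 : (B t *ᵥ z t + c • b) ⬝ᵥ H t *ᵥ z t
      = z t ⬝ᵥ ((B t)ᵀ * H t) *ᵥ z t + c * (g t * (b ⬝ᵥ z t)) := by
    rw [add_dotProduct, smul_dotProduct, swapn (B t) (z t) (H t *ᵥ z t),
      Matrix.mulVec_mulVec, dotProduct_comm b (H t *ᵥ z t),
      swapn (H t) (z t) b, hHsym, hHb, dotProduct_smul, smul_eq_mul,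
      dotProduct_comm (z t) b]
    simp only [smul_eq_mul]
  have e2 : z t ⬝ᵥ H t *ᵥ (B t *ᵥ z t + c • b)
      = z t ⬝ᵥ (H t * B t) *ᵥ z t + c * (g t * (b ⬝ᵥ z t)) := by
    rw [Matrix.mulVec_add, dotProduct_add, Matrix.mulVec_mulVec, Matrix.mulVec_smul,
      hHb, smul_comm, dotProduct_smul, dotProduct_smul, smul_eq_mul, smul_eq_mul,
      dotProduct_comm (z t) b]
    ring
  have e4 : (d • (P t *ᵥ Φ t)) ⬝ᵥ (P t)⁻¹ *ᵥ W t = d * c := by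
    rw [smul_dotProduct, smul_eq_mul, swapN (P t) (Φ t) ((P t)⁻¹ *ᵥ W t), hPsymt,
      Matrix.mulVec_mulVec, Matrix.mul_nonsing_inv _ (hPinv t), Matrix.one_mulVec, hc]
  have e5 : W t ⬝ᵥ (P t)⁻¹ *ᵥ (d • (P t *ᵥ Φ t)) = d * c := by
    rw [Matrix.mulVec_smul, dotProduct_smul, smul_eq_mul, Matrix.mulVec_mulVec,
      Matrix.nonsing_inv_mul _ (hPinv t), Matrix.one_mulVec, hc,
      dotProduct_comm (W t) (Φ t)]
  -- the key matrix identity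
  have e3 : z t ⬝ᵥ ((B t)ᵀ * H t) *ᵥ z t + z t ⬝ᵥ H' *ᵥ z t + z t ⬝ᵥ (H t * B t) *ᵥ z t
      = -(z t ⬝ᵥ Q t *ᵥ z t) := by
    have hmat : (B t)ᵀ * H t + H' + H t * B t = -(Q t) := by
      ext i j
      have h1 : ((B t)ᵀ * H t) i j = (if (j:ℕ) = n-1 then g t else 1) * (B t) j i := by
        rw [hH]
        simp [Matrix.mul_apply, Matrix.diagonal_apply, Matrix.transpose_apply,
          mul_ite, mul_zero, mul_one, Finset.sum_ite_eq]
        ring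
      have h2 : (H t * B t) i j = (if (i:ℕ) = n-1 then g t else 1) * (B t) i j := by
        rw [hH]
        simp [Matrix.mul_apply, Matrix.diagonal_apply, ite_mul, zero_mul,
          Finset.sum_ite_eq]
      simp only [Matrix.add_apply, Matrix.neg_apply, h1, h2, hH', hQ,
        Matrix.diagonal_apply]
      rw [hB]
      simp only [Matrix.of_apply]
      linarith [aux_entry_identity n hn k (g t) (g' t) hgne i j]
    calc z t ⬝ᵥ ((B t)ᵀ * H t) *ᵥ z t + z t ⬝ᵥ H' *ᵥ z t + z t ⬝ᵥ (H t * B t) *ᵥ z t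
        = z t ⬝ᵥ (((B t)ᵀ * H t + H' + H t * B t) *ᵥ z t) := by
          simp [Matrix.add_mulVec, dotProduct_add]
      _ = -(z t ⬝ᵥ Q t *ᵥ z t) := by
          rw [hmat, Matrix.neg_mulVec, dotProduct_neg]
  -- combine
  convert hV using 1
  rw [e1, e2, e4, e5]
  have : z t ⬝ᵥ ((B t)ᵀ * H t) *ᵥ z t + c * (g t * (b ⬝ᵥ z t)) + z t ⬝ᵥ H' *ᵥ z t +
      (z t ⬝ᵥ (H t * B t) *ᵥ z t + c * (g t * (b ⬝ᵥ z t)))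
      = -(z t ⬝ᵥ Q t *ᵥ z t) + 2 * (c * (g t * (b ⬝ᵥ z t))) := by linarith [e3]
  rw [this, hd]
  field_simp
  ring
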